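/- The ratio of the prime-counting function to the complement of the gap sum tends to zero: lim_{x→∞} π(x) / (x − Σ_{k=1}^{x} (p_{p'_k} − p_{p'_k − 1})) = 0, where the limit is taken as the natural number x tends to infinity. -/

import Mathlib

/-- `nthPrime n` is the n-th prime with `nthPrime 1 = 2`. -/
noncomputable def nthPrime (n : ℕ) : ℕ := Nat.nth Nat.Prime (n - 1)

/-- 0-indexed index sequence of the sieve: `sieveIdx 0 = k_1 = 1`, and
`sieveIdx n = k_{n+1}` is the least natural number greater than `k_n` that does
not occur among the previously produced values `p'_1, ..., p'_n`. -/
noncomputable def sieveIdx : ℕ → ℕ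
  | 0 => 1
  | n + 1 => sInf {m : ℕ | sieveIdx n < m ∧ ∀ i ≤ n, nthPrime (sieveIdx i) ≠ m}

/-- `pP n = p'_n` (for `n ≥ 1`), the n-th term of the sieve sequence P'. -/
noncomputable def pP (n : ℕ) : ℕ := nthPrime (sieveIdx (n - 1))

/-- The k-th gap term `p_{p'_k} - p_{p'_k - 1}`. -/
noncomputable def gapTerm (k : ℕ) : ℕ := nthPrime (pP k) - nthPrime (pP k - 1)

open Filter Finset

lemma my_totient_prod_primes (s : Finset ℕ) (h : ∀ p ∈ s, p.Prime) :
    (∏ p ∈ s, p).totient = ∏ p ∈ s, (p - 1) := by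
  induction s using Finset.induction_on with
  | empty => simp
  | @insert a s ha ih =>
    have hp : a.Prime := h a (mem_insert_self a s)
    have hs : ∀ p ∈ s, p.Prime := fun p hps => h p (mem_insert_of_mem hps)
    have hco : a.Coprime (∏ p ∈ s, p) :=
      Nat.Coprime.prod_right fun p hps =>
        (Nat.coprime_primes hp (hs p hps)).mpr (fun e => ha (e ▸ hps))
    rw [Finset.prod_insert ha, Finset.prod_insert ha, Nat.totient_mul hco,
      Nat.totient_prime hp, ih hs]

lemma my_ratio_le (N : ℕ) :
    ((∏ p ∈ N.primesBelow, p).totient : ℝ) / ((∏ p ∈ N.primesBelow, p : ℕ) : ℝ) ≤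
      Real.exp (-∑ p ∈ N.primesBelow, (1 : ℝ) / p) := by
  have hp : ∀ p ∈ N.primesBelow, Nat.Prime p := fun p h => Nat.prime_of_mem_primesBelow h
  rw [my_totient_prod_primes _ hp]
  have heq : ((∏ p ∈ N.primesBelow, (p - 1) : ℕ) : ℝ) / ((∏ p ∈ N.primesBelow, p : ℕ) : ℝ)
      = ∏ p ∈ N.primesBelow, (1 - 1 / (p : ℝ)) := by
    rw [Nat.cast_prod, Nat.cast_prod, ← Finset.prod_div_distrib]
    refine Finset.prod_congr rfl fun p hps => ?_
    have h2 : 2 ≤ p := (hp p hps).two_le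
    have hp0 : (0 : ℝ) < (p : ℝ) := by
      have : 0 < p := by omega
      exact_mod_cast this
    rw [Nat.cast_sub (by omega : 1 ≤ p), Nat.cast_one]
    field_simp
  have hexp : Real.exp (-∑ p ∈ N.primesBelow, (1 : ℝ) / p)
      = ∏ p ∈ N.primesBelow, Real.exp (-(1 / (p : ℝ))) := by
    rw [← Real.exp_sum]
    congr 1
    rw [← Finset.sum_neg_distrib]
  rw [heq, hexp]
  refine Finset.prod_le_prod (fun p hps => ?_) (fun p hps => ?_)
  · have h2 : 2 ≤ p := (hp p hps).two_le
    have hp1 : (1 : ℝ) ≤ (p : ℝ) := by exact_mod_cast (by omega : 1 ≤ p)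
    have : (1 : ℝ) / p ≤ 1 := by
      rw [div_le_one (by linarith)]; linarith
    linarith
  · have := Real.add_one_le_exp (-(1 / (p : ℝ)))
    linarith

lemma my_sum_primes_tendsto :
    Tendsto (fun N : ℕ => ∑ p ∈ N.primesBelow, (1 : ℝ) / p) atTop atTop := by
  classical
  have h := not_summable_one_div_on_primes
  rw [not_summable_iff_tendsto_nat_atTop_of_nonneg
    (fun n => Set.indicator_nonneg (fun a _ => by positivity) n)] at h
  refine h.congr fun n => ?_
  rw [Finset.sum_indicator_eq_sum_filter]
  rfl

lemma my_pi_div_tendsto :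
    Tendsto (fun x : ℕ => (Nat.primeCounting x : ℝ) / x) atTop (nhds 0) := by
  rw [Metric.tendsto_atTop]
  intro ε hε
  obtain ⟨N, hN⟩ := (my_sum_primes_tendsto.eventually_gt_atTop (Real.log (4 / ε))).exists
  set a : ℕ := ∏ p ∈ N.primesBelow, p with ha_def
  have ha : 0 < a := Finset.prod_pos fun p hps => (Nat.prime_of_mem_primesBelow hps).pos
  have haR : (0 : ℝ) < (a : ℝ) := by exact_mod_cast ha
  have hfrac : (a.totient : ℝ) / a < ε / 4 := by
    have h1 : ((a.totient : ℝ)) / a ≤ Real.exp (-∑ p ∈ N.primesBelow, (1 : ℝ) / p) :=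
      my_ratio_le N
    have h3 : -∑ p ∈ N.primesBelow, (1 : ℝ) / p < Real.log (ε / 4) := by
      have h4 : Real.log (ε / 4) = -Real.log (4 / ε) := by
        rw [← Real.log_inv]; congr 1; field_simp
      rw [h4]; linarith
    have h2 : Real.exp (-∑ p ∈ N.primesBelow, (1 : ℝ) / p) < ε / 4 :=
      calc Real.exp (-∑ p ∈ N.primesBelow, (1 : ℝ) / p)
          < Real.exp (Real.log (ε / 4)) := Real.exp_lt_exp.mpr h3
        _ = ε / 4 := Real.exp_log (by positivity)
    linarith
  set C : ℝ := ((a + 1 : ℕ).primeCounting' : ℝ) + (a.totient : ℝ) with hC_def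
  have hC0 : 0 ≤ C := by positivity
  obtain ⟨M, hM⟩ := exists_nat_gt (max ((a : ℝ) + 1) (2 * (C + 1) / ε))
  refine ⟨M + a + 2, fun x hx => ?_⟩
  have hxa : a + 1 ≤ x := by omega
  have hxM : (M : ℝ) ≤ (x : ℝ) := by exact_mod_cast (by omega : M ≤ x)
  have hxR : (0 : ℝ) < (x : ℝ) := by exact_mod_cast (by omega : 0 < x)
  have hx1R : (1 : ℝ) ≤ (x : ℝ) := by exact_mod_cast (by omega : 1 ≤ x)
  -- the counting bound
  have hkey := Nat.primeCounting'_add_le ha.ne' (Nat.lt_succ_self a) (x - a)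
  have hsplit : (a + 1) + (x - a) = x + 1 := by omega
  rw [hsplit] at hkey
  have hpi : (Nat.primeCounting x : ℝ) ≤ C + (a.totient : ℝ) / a * ((x : ℝ) + 1) := by
    have h1 : (Nat.primeCounting x : ℝ) ≤ ((a + 1 : ℕ).primeCounting' : ℝ)
        + (a.totient : ℝ) * (((x - a) / a + 1 : ℕ) : ℝ) := by
      exact_mod_cast hkey
    have h3 : (((x - a) / a : ℕ) : ℝ) ≤ ((x - a : ℕ) : ℝ) / a :=
      Nat.cast_div_le
    have h4 : ((x - a : ℕ) : ℝ) ≤ (x : ℝ) + 1 := by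
      exact_mod_cast (by omega : (x - a : ℕ) ≤ x + 1)
    have h5 : ((x - a : ℕ) : ℝ) / a ≤ ((x : ℝ) + 1) / a := by gcongr
    have h2 : (((x - a) / a + 1 : ℕ) : ℝ) ≤ ((x : ℝ) + 1) / a + 1 := by
      push_cast
      linarith [h3.trans h5]
    have h6 : (0 : ℝ) ≤ (a.totient : ℝ) := by positivity
    have h7 : (a.totient : ℝ) * (((x - a) / a + 1 : ℕ) : ℝ)
        ≤ (a.totient : ℝ) * (((x : ℝ) + 1) / a + 1) := by gcongr
    have h8 : (a.totient : ℝ) * (((x : ℝ) + 1) / a + 1)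
        = (a.totient : ℝ) / a * ((x : ℝ) + 1) + (a.totient : ℝ) := by
      field_simp
    rw [hC_def]
    linarith
  have hdiv : (Nat.primeCounting x : ℝ) / x ≤ C / x + (a.totient : ℝ) / a * (((x : ℝ) + 1) / x) := by
    have : C / x + (a.totient : ℝ) / a * (((x : ℝ) + 1) / x)
        = (C + (a.totient : ℝ) / a * ((x : ℝ) + 1)) / x := by
      field_simp
    rw [this]
    gcongr
  have hq : (0 : ℝ) ≤ (a.totient : ℝ) / a := by positivity
  have hx2 : ((x : ℝ) + 1) / x ≤ 2 := by
    rw [div_le_iff₀ hxR]; linarith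
  have h7 : (a.totient : ℝ) / a * (((x : ℝ) + 1) / x) ≤ (a.totient : ℝ) / a * 2 :=
    mul_le_mul_of_nonneg_left hx2 hq
  have h9 : C / x < ε / 2 := by
    have hM2 : 2 * (C + 1) / ε < (x : ℝ) :=
      lt_of_lt_of_le (lt_of_le_of_lt (le_max_right _ _) hM) hxM
    rw [div_lt_iff₀ hε] at hM2
    rw [div_lt_iff₀ hxR]
    nlinarith
  rw [Real.dist_eq, sub_zero, abs_of_nonneg (by positivity)]
  calc (Nat.primeCounting x : ℝ) / x
      ≤ C / x + (a.totient : ℝ) / a * (((x : ℝ) + 1) / x) := hdiv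
    _ < ε := by linarith

/-! ### Sieve facts -/

lemma my_sieve_nonempty (n : ℕ) :
    {m : ℕ | sieveIdx n < m ∧ ∀ i ≤ n, nthPrime (sieveIdx i) ≠ m}.Nonempty := by
  classical
  refine ⟨(Finset.range (n + 1)).sup (fun i => nthPrime (sieveIdx i)) + sieveIdx n + 1,
    by omega, fun i hi => ?_⟩
  have h : nthPrime (sieveIdx i) ≤ (Finset.range (n + 1)).sup (fun i => nthPrime (sieveIdx i)) :=
    Finset.le_sup (f := fun i => nthPrime (sieveIdx i)) (Finset.mem_range.mpr (Nat.lt_succ_of_le hi))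
  omega

lemma my_sieveIdx_lt (n : ℕ) : sieveIdx n < sieveIdx (n + 1) := by
  have h := Nat.sInf_mem (my_sieve_nonempty n)
  rw [show sieveIdx (n + 1)
      = sInf {m : ℕ | sieveIdx n < m ∧ ∀ i ≤ n, nthPrime (sieveIdx i) ≠ m} from by rw [sieveIdx]]
  exact h.1

lemma my_le_sieveIdx (n : ℕ) : n + 1 ≤ sieveIdx n := by
  induction n with
  | zero => simp [sieveIdx]
  | succ n ih => have := my_sieveIdx_lt n; omega

lemma my_pP_ge (k : ℕ) (hk : 2 ≤ k) : 3 ≤ pP k := by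
  have h1 : 2 ≤ sieveIdx (k - 1) := by
    have := my_le_sieveIdx (k - 1); omega
  have h2 : Nat.nth Nat.Prime 1 ≤ Nat.nth Nat.Prime (sieveIdx (k - 1) - 1) :=
    (Nat.nth_le_nth Nat.infinite_setOf_prime).mpr (by omega)
  have h3 : Nat.nth Nat.Prime 0 < Nat.nth Nat.Prime 1 :=
    (Nat.nth_lt_nth Nat.infinite_setOf_prime).mpr (by omega)
  rw [Nat.nth_prime_zero_eq_two] at h3
  unfold pP nthPrime
  omega

lemma my_gapTerm_ge (k : ℕ) (hk : 2 ≤ k) : 2 ≤ gapTerm k := by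
  have h3 : 3 ≤ pP k := my_pP_ge k hk
  have hlt : Nat.nth Nat.Prime (pP k - 1 - 1) < Nat.nth Nat.Prime (pP k - 1) :=
    (Nat.nth_lt_nth Nat.infinite_setOf_prime).mpr (by omega)
  have hodd : ∀ j : ℕ, 1 ≤ j → Odd (Nat.nth Nat.Prime j) := by
    intro j hj
    have hp : (Nat.nth Nat.Prime j).Prime := Nat.prime_nth_prime j
    refine hp.odd_of_ne_two ?_
    have h0 : Nat.nth Nat.Prime 0 < Nat.nth Nat.Prime j :=
      (Nat.nth_lt_nth Nat.infinite_setOf_prime).mpr (by omega)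
    rw [Nat.nth_prime_zero_eq_two] at h0
    omega
  have ho1 : Odd (Nat.nth Nat.Prime (pP k - 1)) := hodd _ (by omega)
  have ho2 : Odd (Nat.nth Nat.Prime (pP k - 1 - 1)) := hodd _ (by omega)
  have heven : Even (Nat.nth Nat.Prime (pP k - 1) - Nat.nth Nat.Prime (pP k - 1 - 1)) :=
    Nat.Odd.sub_odd ho1 ho2
  obtain ⟨c, hc⟩ := heven
  unfold gapTerm nthPrime
  have : pP k - 1 - 1 = pP k - 1 - 1 := rfl
  omega

lemma my_sum_ge (x : ℕ) : 2 * (x - 1) ≤ ∑ k ∈ Finset.Icc 1 x, gapTerm k := by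
  rcases Nat.lt_or_ge x 2 with h | h
  · interval_cases x <;> simp
  · calc 2 * (x - 1) = ∑ _k ∈ Finset.Icc 2 x, 2 := by
          rw [Finset.sum_const, Nat.card_Icc]
          simp [Nat.smul_one_eq_cast]
          omega
    _ ≤ ∑ k ∈ Finset.Icc 2 x, gapTerm k :=
        Finset.sum_le_sum fun k hk => my_gapTerm_ge k (Finset.mem_Icc.mp hk).1
    _ ≤ ∑ k ∈ Finset.Icc 1 x, gapTerm k :=
        Finset.sum_le_sum_of_subset (Finset.Icc_subset_Icc (by omega) le_rfl)


open Filter in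
/-- The ratio of π(x) to the complement of the gap sum tends to zero:
`lim_{x→∞} π(x) / (x − Σ_{k=1}^{x} (p_{p'_k} − p_{p'_k − 1})) = 0`. -/
theorem stmt2 :
    Tendsto (fun x : ℕ =>
        (Nat.primeCounting x : ℝ) /
          ((x : ℝ) - ((∑ k ∈ Finset.Icc 1 x, gapTerm k : ℕ) : ℝ)))
      atTop (nhds 0) := by
  -- auxiliary limit: π x / (x - 2) → 0
  have hxlim : Tendsto (fun x : ℕ => (Nat.primeCounting x : ℝ) / ((x : ℝ) - 2)) atTop (nhds 0) := by
    have hfrac : Tendsto (fun x : ℕ => (2 : ℝ) / ((x : ℝ) - 2)) atTop (nhds 0) :=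
      Filter.Tendsto.div_atTop tendsto_const_nhds
        (Filter.tendsto_atTop_add_const_right atTop (-2) tendsto_natCast_atTop_atTop)
    have hone : Tendsto (fun x : ℕ => (x : ℝ) / ((x : ℝ) - 2)) atTop (nhds 1) := by
      have h1 : Tendsto (fun x : ℕ => 1 + (2 : ℝ) / ((x : ℝ) - 2)) atTop (nhds (1 + 0)) :=
        tendsto_const_nhds.add hfrac
      rw [add_zero] at h1
      refine h1.congr' ?_
      filter_upwards [eventually_ge_atTop 3] with x hx
      have hx2 : ((x : ℝ) - 2) ≠ 0 := by
        have : (3 : ℝ) ≤ (x : ℝ) := by exact_mod_cast hx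
        linarith
      field_simp; ring
    have := my_pi_div_tendsto.mul hone
    rw [zero_mul] at this
    refine this.congr' ?_
    filter_upwards [eventually_ge_atTop 3] with x hx
    have hx0 : ((x : ℝ)) ≠ 0 := by
      have : (3 : ℝ) ≤ (x : ℝ) := by exact_mod_cast hx
      linarith
    field_simp
  refine squeeze_zero_norm' ?_ hxlim
  filter_upwards [eventually_ge_atTop 4] with x hx
  set S : ℕ := ∑ k ∈ Finset.Icc 1 x, gapTerm k with hS_def
  have hS : 2 * (x - 1) ≤ S := my_sum_ge x
  have hSx : x + 2 ≤ S := by omega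
  have hSxR : (x : ℝ) + 2 ≤ (S : ℝ) := by exact_mod_cast hSx
  have hxR : (4 : ℝ) ≤ (x : ℝ) := by exact_mod_cast hx
  have hSR2 : (x : ℝ) - 2 ≤ (S : ℝ) - x := by
    have h2 : 2 * ((x : ℝ) - 1) ≤ (S : ℝ) := by
      have : (2 * (x - 1) : ℕ) ≤ S := hS
      have h3 : ((2 * (x - 1) : ℕ) : ℝ) = 2 * ((x : ℝ) - 1) := by
        have hx1 : 1 ≤ x := by omega
        push_cast [Nat.cast_sub hx1]
        ring
      calc 2 * ((x : ℝ) - 1) = ((2 * (x - 1) : ℕ) : ℝ) := h3.symm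
        _ ≤ (S : ℝ) := by exact_mod_cast this
    linarith
  have habs : ‖(Nat.primeCounting x : ℝ) / ((x : ℝ) - (S : ℝ))‖
      = (Nat.primeCounting x : ℝ) / ((S : ℝ) - x) := by
    rw [norm_div, Real.norm_eq_abs, Real.norm_eq_abs, abs_of_nonneg (by positivity),
      abs_of_nonpos (by linarith), neg_sub]
  rw [habs]
  exact div_le_div_of_nonneg_left (by positivity) (by linarith) (by linarith)
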